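/- Let A₁, A₂ and C be bounded operators on a complex Hilbert space. If A₁ and A₂ are self-adjoint and nonnegative and satisfy A₂² ≥ A₁² ≥ 0 (i.e. A₂² − A₁² is a nonnegative operator), then ‖A₁ C A₁‖ ≤ ‖A₂ C A₂‖. -/

import Mathlib

/-!
Statement 9 (Sandwich inequality):
If `A₁, A₂` are bounded self-adjoint nonnegative operators with `A₂² ≥ A₁² ≥ 0` and `C`
is any bounded operator, then `‖A₁ C A₁‖ ≤ ‖A₂ C A₂‖`.
-/

open scoped InnerProductSpace

section Aux

variable {A : Type*} [CStarAlgebra A] [PartialOrder A] [StarOrderedRing A]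

/-- If `0 ≤ s`, `s * s ≤ t * t` and `t` is a unit with self-adjoint inverse `r`, then
`s * r` is a contraction. -/
lemma sandwich_contraction_aux {s t : A} (hs : 0 ≤ s) (hst : s * s ≤ t * t)
    (u : Aˣ) (hu : (u : A) = t) (hrs : star ((u⁻¹ : Aˣ) : A) = ((u⁻¹ : Aˣ) : A)) :
    ‖s * ((u⁻¹ : Aˣ) : A)‖ ≤ 1 := by
  set r : A := ((u⁻¹ : Aˣ) : A) with hr
  have hrt : r * t = 1 := by rw [hr, ← hu]; exact u.inv_mul
  have htr : t * r = 1 := by rw [hr, ← hu]; exact u.mul_inv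
  have key : star (s * r) * (s * r) ≤ 1 := by
    have h1 : star (s * r) * (s * r) = star r * (s * s) * r := by
      rw [star_mul, (IsSelfAdjoint.of_nonneg hs).star_eq]
      noncomm_ring
    have h2 : star r * (t * t) * r = 1 := by
      rw [hrs]
      calc r * (t * t) * r = (r * t) * (t * r) := by noncomm_ring
        _ = 1 := by rw [hrt, htr, one_mul]
    calc star (s * r) * (s * r) = star r * (s * s) * r := h1
      _ ≤ star r * (t * t) * r := star_left_conjugate_le_conjugate hst r
      _ = 1 := h2
  have h0 : (0 : A) ≤ star (s * r) * (s * r) := star_mul_self_nonneg _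
  have hn := (CStarAlgebra.norm_le_one_iff_of_nonneg _ h0).mpr key
  nlinarith [CStarRing.norm_star_mul_self (x := s * r), norm_nonneg (s * r)]

/-- Sandwich inequality in a unital C⋆-algebra. -/
lemma sandwich_cstar {a₁ a₂ : A} (c : A) (h₁ : 0 ≤ a₁) (h₂ : 0 ≤ a₂)
    (hsq : a₁ * a₁ ≤ a₂ * a₂) : ‖a₁ * c * a₁‖ ≤ ‖a₂ * c * a₂‖ := by
  rcases subsingleton_or_nontrivial A with hA | hA
  · rw [Subsingleton.elim (a₁ * c * a₁) (a₂ * c * a₂)]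
  suffices h : ∀ ε : ℝ, 0 < ε → ε ≤ 1 →
      ‖a₁ * c * a₁‖ ≤ ‖a₂ * c * a₂‖ + ε * (‖c‖ * (2 * ‖a₁‖ + 1)) by
    refine le_of_forall_pos_le_add fun δ hδ => ?_
    set K := ‖c‖ * (2 * ‖a₁‖ + 1) with hK
    have hK0 : 0 ≤ K := by positivity
    have hε : 0 < min 1 (δ / (K + 1)) := by positivity
    refine (h _ hε (min_le_left _ _)).trans ?_
    have h1 : min 1 (δ / (K + 1)) * K ≤ (δ / (K + 1)) * (K + 1) := by
      apply mul_le_mul (min_le_right _ _) (by linarith) hK0 (by positivity)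
    rw [div_mul_cancel₀ _ (by positivity : K + 1 ≠ 0)] at h1
    linarith
  intro ε hε hε1
  -- the regularizing scalar
  set f : A := algebraMap ℝ A (Real.sqrt ε) with hf
  have hfsa : star f = f := by
    rw [hf, ← algebraMap_star_comm, star_trivial]
  set e : A := f * f with he
  have he0 : 0 ≤ e := by
    rw [he]; nth_rewrite 1 [← hfsa]; exact star_mul_self_nonneg f
  have hesa : star e = e := by rw [he, star_mul, hfsa]
  have heval : e = algebraMap ℝ A ε := by
    rw [he, hf, ← map_mul, Real.mul_self_sqrt hε.le]
  have heunit : IsUnit e := by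
    rw [heval]
    exact (isUnit_iff_ne_zero.mpr hε.ne').map (algebraMap ℝ A)
  have hene : ‖e‖ ≤ ε := by
    rw [heval, norm_algebraMap']
    simp [Real.norm_eq_abs, abs_of_pos hε]
  set t : A := a₂ + e with ht
  have htsa : star t = t := by
    rw [ht, star_add, hesa, (IsSelfAdjoint.of_nonneg h₂).star_eq]
  have htu : IsUnit t := CStarAlgebra.isUnit_of_le e (le_add_of_nonneg_left h₂)
    (IsStrictlyPositive.iff_of_unital.mpr ⟨he0, heunit⟩)
  obtain ⟨u, hu⟩ := htu
  set r : A := ((u⁻¹ : Aˣ) : A) with hr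
  have hrt : r * t = 1 := by rw [hr, ← hu]; exact u.inv_mul
  have htr : t * r = 1 := by rw [hr, ← hu]; exact u.mul_inv
  have hrs : star r = r := by
    calc star r = star r * (t * r) := by rw [htr, mul_one]
      _ = (star r * star t) * r := by rw [htsa, mul_assoc]
      _ = star (t * r) * r := by rw [star_mul]
      _ = r := by rw [htr, star_one, one_mul]
  -- a₂ * a₂ ≤ t * t
  have hcomm : f * a₂ = a₂ * f := by rw [hf]; exact Algebra.commutes _ _
  have hfa : 0 ≤ f * a₂ * f := by
    nth_rewrite 1 [← hfsa]; exact star_left_conjugate_nonneg h₂ f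
  have hee : 0 ≤ e * e := by nth_rewrite 1 [← hesa]; exact star_mul_self_nonneg e
  have h5 : a₂ * e = f * a₂ * f := by rw [he, ← mul_assoc, ← hcomm]
  have hecomm : e * a₂ = a₂ * e := by rw [heval]; exact Algebra.commutes (R := ℝ) ε a₂
  have h6 : e * a₂ = f * a₂ * f := hecomm.trans h5
  have hsq2 : a₂ * a₂ ≤ t * t := by
    have hexp : t * t = a₂ * a₂ + (a₂ * e + (e * a₂ + e * e)) := by
      rw [ht]; noncomm_ring
    calc a₂ * a₂ ≤ a₂ * a₂ + (a₂ * e + (e * a₂ + e * e)) := by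
          refine le_add_of_nonneg_right (add_nonneg ?_ (add_nonneg ?_ hee))
          · rw [h5]; exact hfa
          · rw [h6]; exact hfa
      _ = t * t := hexp.symm
  -- contraction bounds
  have hp1 : ‖a₁ * r‖ ≤ 1 := sandwich_contraction_aux h₁ (hsq.trans hsq2) u hu hrs
  have hp2 : ‖a₂ * r‖ ≤ 1 := sandwich_contraction_aux h₂ hsq2 u hu hrs
  have hstar1 : star (a₁ * r) = r * a₁ := by
    rw [star_mul, hrs, (IsSelfAdjoint.of_nonneg h₁).star_eq]
  have hstar2 : star (a₂ * r) = r * a₂ := by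
    rw [star_mul, hrs, (IsSelfAdjoint.of_nonneg h₂).star_eq]
  have hq1 : ‖r * a₁‖ ≤ 1 := by rw [← hstar1, norm_star]; exact hp1
  have hq2 : ‖r * a₂‖ ≤ 1 := by rw [← hstar2, norm_star]; exact hp2
  -- the main identity
  have hmain : a₁ * c * a₁ = (a₁ * r) * (a₂ * c * a₂) * (r * a₁) +
      ((a₁ * (r * a₂)) * c * (e * (r * a₁)) +
        ((a₁ * r * e) * c * ((a₂ * r) * a₁) + (a₁ * r * e) * c * (e * (r * a₁)))) := by
    have h7 : a₁ * (r * t) = a₁ := by rw [hrt, mul_one]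
    have h8 : (t * r) * a₁ = a₁ := by rw [htr, one_mul]
    calc a₁ * c * a₁ = (a₁ * (r * t)) * c * ((t * r) * a₁) := by rw [h7, h8]
      _ = _ := by rw [ht]; noncomm_ring
  have hbound : ∀ x y z : A, ‖x * y * z‖ ≤ ‖x‖ * ‖y‖ * ‖z‖ := fun x y z =>
    (norm_mul_le _ _).trans (by gcongr; exact norm_mul_le _ _)
  -- bounds for each term
  have hT0 : ‖(a₁ * r) * (a₂ * c * a₂) * (r * a₁)‖ ≤ ‖a₂ * c * a₂‖ := by
    refine (hbound _ _ _).trans ?_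
    calc ‖a₁ * r‖ * ‖a₂ * c * a₂‖ * ‖r * a₁‖ ≤ 1 * ‖a₂ * c * a₂‖ * 1 := by gcongr
      _ = ‖a₂ * c * a₂‖ := by ring
  have hx1 : ‖a₁ * (r * a₂)‖ ≤ ‖a₁‖ :=
    (norm_mul_le _ _).trans (mul_le_of_le_one_right (norm_nonneg _) hq2)
  have hx2 : ‖e * (r * a₁)‖ ≤ ε :=
    (norm_mul_le _ _).trans ((mul_le_of_le_one_right (norm_nonneg _) hq1).trans hene)
  have hx3 : ‖a₁ * r * e‖ ≤ ε := by
    refine (norm_mul_le _ _).trans ?_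
    calc ‖a₁ * r‖ * ‖e‖ ≤ 1 * ε := by gcongr
      _ = ε := one_mul ε
  have hx4 : ‖(a₂ * r) * a₁‖ ≤ ‖a₁‖ := by
    refine (norm_mul_le _ _).trans ?_
    calc ‖a₂ * r‖ * ‖a₁‖ ≤ 1 * ‖a₁‖ := by gcongr
      _ = ‖a₁‖ := one_mul _
  have hT1 : ‖(a₁ * (r * a₂)) * c * (e * (r * a₁))‖ ≤ ‖a₁‖ * ‖c‖ * ε := by
    refine (hbound _ _ _).trans ?_
    gcongr
  have hT2 : ‖(a₁ * r * e) * c * ((a₂ * r) * a₁)‖ ≤ ε * ‖c‖ * ‖a₁‖ := by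
    refine (hbound _ _ _).trans ?_
    gcongr
  have hT3 : ‖(a₁ * r * e) * c * (e * (r * a₁))‖ ≤ ε * ‖c‖ * ε := by
    refine (hbound _ _ _).trans ?_
    gcongr
  set T0 := a₁ * r * (a₂ * c * a₂) * (r * a₁) with hT0d
  set T1 := a₁ * (r * a₂) * c * (e * (r * a₁)) with hT1d
  set T2 := a₁ * r * e * c * (a₂ * r * a₁) with hT2d
  set T3 := a₁ * r * e * c * (e * (r * a₁)) with hT3d
  have hsum : ‖a₁ * c * a₁‖ ≤ ‖T0‖ + (‖T1‖ + (‖T2‖ + ‖T3‖)) := by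
    rw [hmain]
    exact (norm_add_le _ _).trans (add_le_add_right ((norm_add_le _ _).trans
      (add_le_add_right (norm_add_le _ _) _)) _)
  nlinarith [hT0, hT1, hT2, hT3, hsum, norm_nonneg c, norm_nonneg a₁, hε.le, hε1,
    mul_nonneg hε.le (norm_nonneg c)]

end Aux

theorem sandwich_norm_inequality
    {H : Type*} [NormedAddCommGroup H] [InnerProductSpace ℂ H] [CompleteSpace H]
    (A₁ A₂ C : H →L[ℂ] H)
    (hA₁ : IsSelfAdjoint A₁) (hA₂ : IsSelfAdjoint A₂)
    (hA₁pos : ∀ x : H, 0 ≤ (⟪x, A₁ x⟫_ℂ).re)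
    (hA₂pos : ∀ x : H, 0 ≤ (⟪x, A₂ x⟫_ℂ).re)
    (hsq : ∀ x : H, (⟪x, A₁ (A₁ x)⟫_ℂ).re ≤ (⟪x, A₂ (A₂ x)⟫_ℂ).re) :
    ‖A₁.comp (C.comp A₁)‖ ≤ ‖A₂.comp (C.comp A₂)‖ := by
  have h₁ : (0 : H →L[ℂ] H) ≤ A₁ := by
    rw [ContinuousLinearMap.nonneg_iff_isPositive]
    refine ⟨ContinuousLinearMap.isSelfAdjoint_iff_isSymmetric.mp hA₁, fun x => ?_⟩
    rw [ContinuousLinearMap.reApplyInnerSelf_apply]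
    rw [inner_re_symm]
    exact hA₁pos x
  have h₂ : (0 : H →L[ℂ] H) ≤ A₂ := by
    rw [ContinuousLinearMap.nonneg_iff_isPositive]
    refine ⟨ContinuousLinearMap.isSelfAdjoint_iff_isSymmetric.mp hA₂, fun x => ?_⟩
    rw [ContinuousLinearMap.reApplyInnerSelf_apply]
    rw [inner_re_symm]
    exact hA₂pos x
  have hsq' : A₁ * A₁ ≤ A₂ * A₂ := by
    rw [ContinuousLinearMap.le_def]
    refine ⟨?_, fun x => ?_⟩
    · refine ContinuousLinearMap.isSelfAdjoint_iff_isSymmetric.mp ?_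
      rw [IsSelfAdjoint, star_sub, star_mul, star_mul, hA₁.star_eq, hA₂.star_eq]
    · rw [ContinuousLinearMap.reApplyInnerSelf_apply]
      simp only [ContinuousLinearMap.sub_apply, ContinuousLinearMap.mul_apply]
      rw [inner_sub_left, map_sub]
      rw [inner_re_symm (A₂ (A₂ x)) x, inner_re_symm (A₁ (A₁ x)) x]
      have := hsq x
      simp only [RCLike.re_to_complex] at *
      linarith
  have key := sandwich_cstar C h₁ h₂ hsq'
  have e1 : A₁.comp (C.comp A₁) = A₁ * C * A₁ := by rw [mul_assoc]; rfl
  have e2 : A₂.comp (C.comp A₂) = A₂ * C * A₂ := by rw [mul_assoc]; rfl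
  rw [e1, e2]
  exact key
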